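/- If a walk in a directed graph on vertex set Q has length at least |Q|², then it contains |Q| pairwise non-overlapping simple cycles, and at least one of these cycles can be removed from the walk without decreasing the set of vertices visited by the walk. -/

import Mathlib

/-- The subwalk of `w` occupying positions `i` through `j` (inclusive). -/
def cycleSegment {V : Type*} (w : List V) (i j : ℕ) : List V :=
  (w.drop i).take (j - i + 1)

/-- The positions `i < j` delimit a simple cycle of the walk `w` (as a list of
visited vertices): the vertices at positions `i` and `j` coincide and every
vertex occurs at most twice in the subwalk from `i` to `j`. -/
def IsSimpleCycleAt {V : Type*} [DecidableEq V] (w : List V) (i j : ℕ) : Prop :=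
  i < j ∧ j < w.length ∧
  w[i]? = w[j]? ∧
  ∀ v : V, (cycleSegment w i j).count v ≤ 2

/-- In any window of `card V + 1` consecutive positions of a walk there is a simple cycle. -/
lemma exists_cycle_in {V : Type*} [Fintype V] [DecidableEq V] (w : List V) (s : ℕ)
    (hs : s + Fintype.card V < w.length) :
    ∃ i j, s ≤ i ∧ j ≤ s + Fintype.card V ∧ IsSimpleCycleAt w i j := by
  classical
  set n := Fintype.card V with hn
  -- pigeonhole: two equal vertices among positions s .. s+n
  have hpig : ∃ x y : Fin (n + 1), x ≠ y ∧
      w.get ⟨s + x.val, by have := x.isLt; omega⟩ = w.get ⟨s + y.val, by have := y.isLt; omega⟩ := by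
    apply Fintype.exists_ne_map_eq_of_card_lt
      (fun k : Fin (n + 1) => w.get ⟨s + k.val, by have := k.isLt; omega⟩)
    simp [hn]
  -- there is a pair of positions in the window with equal vertices
  set P : ℕ → Prop := fun d =>
    ∃ a b, s ≤ a ∧ a < b ∧ b ≤ s + n ∧ b - a = d ∧ w[a]? = w[b]? with hP
  have hPex : ∃ d, P d := by
    obtain ⟨x, y, hxy, hfeq⟩ := hpig
    rcases lt_or_gt_of_ne (fun h => hxy (Fin.ext h) : (x : ℕ) ≠ (y : ℕ)) with h | h
    · refine ⟨(s + y) - (s + x), s + x, s + y, by omega, by omega,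
        by have := y.isLt; omega, rfl, ?_⟩
      rw [List.getElem?_eq_getElem (by have := x.isLt; omega), List.getElem?_eq_getElem (by have := y.isLt; omega)]
      exact congrArg some hfeq
    · refine ⟨(s + x) - (s + y), s + y, s + x, by omega, by omega,
        by have := x.isLt; omega, rfl, ?_⟩
      rw [List.getElem?_eq_getElem (by have := x.isLt; omega), List.getElem?_eq_getElem (by have := y.isLt; omega)]
      exact (congrArg some hfeq).symm
  obtain ⟨a, b, hsa, hab, hbs, hd, heq⟩ := Nat.find_spec hPex
  have hmin : ∀ d' < Nat.find hPex, ¬ P d' := fun d' h => Nat.find_min hPex h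
  have hblen : b < w.length := by omega
  -- the half-open segment from a to b-1 has no repeats
  have hnd : ((w.drop a).take (b - a)).Nodup := by
    rw [List.nodup_iff_injective_get]
    intro k k' hkk'
    by_contra hne
    have hlen' : ((w.drop a).take (b - a)).length = b - a := by
      simp [List.length_take, List.length_drop]; omega
    have hk : (k : ℕ) < b - a := by have := k.isLt; omega
    have hk' : (k' : ℕ) < b - a := by have := k'.isLt; omega
    have hget : ∀ (m : Fin ((w.drop a).take (b - a)).length),
        ((w.drop a).take (b - a)).get m = w.get ⟨a + m.val, by have := m.isLt; omega⟩ := by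
      intro m
      have h1 : ((w.drop a).take (b - a)).get m = ((w.drop a).take (b - a))[m.val] := rfl
      rw [h1, List.getElem_take, List.getElem_drop]
      rfl
    have hPd : ∀ (p q : ℕ), p < q → p < b - a → q < b - a →
        w[a + p]? = w[a + q]? → False := by
      intro p q hpq hp hq hpeq
      have : P (q - p) := ⟨a + p, a + q, by omega, by omega, by omega, by omega, hpeq⟩
      exact hmin (q - p) (by omega) this
    simp only [hget] at hkk'
    have hval : w[a + k.val]? = w[a + k'.val]? :=
      (List.getElem?_eq_getElem (by omega)).trans
        ((congrArg some hkk').trans (List.getElem?_eq_getElem (by omega)).symm)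
    rcases lt_trichotomy (k : ℕ) (k' : ℕ) with h | h | h
    · exact hPd k k' h hk hk' hval
    · exact hne (Fin.ext h)
    · exact hPd k' k h hk' hk hval.symm
  refine ⟨a, b, hsa, hbs, hab, hblen, heq, ?_⟩
  intro v
  have hseg : cycleSegment w a b = (w.drop a).take (b - a) ++ ((w.drop a)[b - a]?).toList := by
    unfold cycleSegment
    exact List.take_succ
  rw [hseg, List.count_append]
  have h1 : ((w.drop a).take (b - a)).count v ≤ 1 := List.nodup_iff_count_le_one.mp hnd v
  have h2 : (((w.drop a)[b - a]?).toList).count v ≤ 1 := by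
    have := List.count_le_length (l := ((w.drop a)[b - a]?).toList) (a := v)
    rcases hop : (w.drop a)[b - a]? with _ | x
    · simp
    · simpa using List.count_le_length (l := [x]) (a := v)
  omega

theorem stmt_18 {V : Type*} [Fintype V] [DecidableEq V] (E : V → V → Prop)
    (w : List V) (hw : w ≠ []) (hchain : w.Chain' E)
    (hlen : (Fintype.card V) ^ 2 ≤ w.length - 1) :
    ∃ pos : Fin (Fintype.card V) → ℕ × ℕ,
      (∀ t, IsSimpleCycleAt w (pos t).1 (pos t).2) ∧
      (∀ t t', t < t' → (pos t).2 ≤ (pos t').1) ∧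
      ∃ t, (w.take (pos t).1 ++ w.drop (pos t).2).toFinset = w.toFinset := by
  classical
  set n := Fintype.card V with hn
  have hn0 : 0 < n := Fintype.card_pos_iff.mpr ⟨w.head hw⟩
  have hlw : n ^ 2 < w.length := by
    have : 1 ≤ w.length := List.length_pos_iff.mpr hw
    omega
  have H : ∀ t : Fin n, ∃ p : ℕ × ℕ,
      (t : ℕ) * n ≤ p.1 ∧ p.2 ≤ (t : ℕ) * n + n ∧ IsSimpleCycleAt w p.1 p.2 := by
    intro t
    have ht1 : (t : ℕ) + 1 ≤ n := t.isLt
    have hmul : ((t : ℕ) + 1) * n ≤ n * n := Nat.mul_le_mul_right n ht1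
    have hs : (t : ℕ) * n + n < w.length := by
      have : n * n = n ^ 2 := (sq n).symm
      nlinarith
    obtain ⟨i, j, hi, hj, hc⟩ := exists_cycle_in w ((t : ℕ) * n) hs
    exact ⟨(i, j), hi, hj, hc⟩
  choose pos hp1 hp2 hp3 using H
  have hnol : ∀ t t' : Fin n, t < t' → (pos t).2 ≤ (pos t').1 := by
    intro t t' htt
    have h1 : (t : ℕ) + 1 ≤ (t' : ℕ) := htt
    calc (pos t).2 ≤ (t : ℕ) * n + n := hp2 t
      _ = ((t : ℕ) + 1) * n := by ring
      _ ≤ (t' : ℕ) * n := Nat.mul_le_mul_right n h1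
      _ ≤ (pos t').1 := hp1 t'
  refine ⟨pos, hp3, hnol, ?_⟩
  -- W t : vertices occurring only strictly inside cycle t
  set W : Fin n → Finset V := fun t =>
    w.toFinset.filter (fun v => ∀ p, w[p]? = some v → (pos t).1 < p ∧ p < (pos t).2) with hW
  have hWmem : ∀ t v, v ∈ W t ↔ v ∈ w ∧
      ∀ p, w[p]? = some v → (pos t).1 < p ∧ p < (pos t).2 := by
    intro t v
    simp [hW, List.mem_toFinset]
  have hdisj : ∀ t t' : Fin n, t ≠ t' → Disjoint (W t) (W t') := by
    have key : ∀ t t' : Fin n, t < t' → Disjoint (W t) (W t') := by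
      intro t t' htt
      rw [Finset.disjoint_left]
      intro v hv hv'
      rw [hWmem] at hv hv'
      obtain ⟨hvw, hin⟩ := hv
      obtain ⟨-, hin'⟩ := hv'
      obtain ⟨p, hp⟩ := List.mem_iff_getElem?.mp hvw
      have h1 := hin p hp
      have h2 := hin' p hp
      have h3 := hnol t t' htt
      omega
    intro t t' htt
    rcases lt_or_gt_of_ne htt with h | h
    · exact key t t' h
    · exact (key t' t h).symm
  set t0 : Fin n := ⟨0, hn0⟩ with ht0
  have hi0 : (pos t0).1 < w.length := by
    have := hp3 t0
    obtain ⟨h1, h2, -, -⟩ := this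
    omega
  set v0 : V := w.get ⟨(pos t0).1, hi0⟩ with hv0
  have hv0occ : w[(pos t0).1]? = some v0 := List.getElem?_eq_getElem hi0
  have hv0not : ∀ t, v0 ∉ W t := by
    intro t hmem
    rw [hWmem] at hmem
    obtain ⟨-, hin⟩ := hmem
    have h1 := hin (pos t0).1 hv0occ
    rcases eq_or_ne t t0 with rfl | hne
    · omega
    · have ht0t : t0 < t := by
        have : (t : ℕ) ≠ 0 := fun h => hne (Fin.ext (by simp [ht0, h]))
        exact Fin.lt_def.mpr (by simp [ht0]; omega)
      have h2 := hnol t0 t ht0t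
      have h3 := (hp3 t0).1
      omega
  have hex : ∃ t, W t = ∅ := by
    by_contra hc
    push_neg at hc
    have hne : ∀ t, (W t).Nonempty := fun t => hc t
    have hsub : Finset.univ.biUnion W ⊆ Finset.univ.erase v0 := by
      intro v hv
      obtain ⟨t, -, hvt⟩ := Finset.mem_biUnion.mp hv
      refine Finset.mem_erase.mpr ⟨?_, Finset.mem_univ v⟩
      rintro rfl
      exact hv0not t hvt
    have hcard1 : (Finset.univ.biUnion W).card = ∑ t : Fin n, (W t).card :=
      Finset.card_biUnion (fun x _ y _ h => hdisj x y h)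
    have hcard2 : n ≤ ∑ t : Fin n, (W t).card := by
      calc n = ∑ _t : Fin n, 1 := by simp
        _ ≤ ∑ t : Fin n, (W t).card :=
          Finset.sum_le_sum (fun t _ => Finset.card_pos.mpr (hne t))
    have hcard3 : (Finset.univ.erase v0).card = n - 1 := by
      rw [Finset.card_erase_of_mem (Finset.mem_univ v0)]
      simp [hn]
    have := Finset.card_le_card hsub
    omega
  obtain ⟨t, htW⟩ := hex
  refine ⟨t, ?_⟩
  ext v
  simp only [List.mem_toFinset, List.mem_append]
  constructor
  · rintro (h | h)
    · exact List.take_subset _ _ h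
    · exact List.drop_subset _ _ h
  · intro hv
    have hnotW : v ∉ W t := by simp [htW]
    rw [hWmem] at hnotW
    push_neg at hnotW
    obtain ⟨p, hp, hpout⟩ := hnotW hv
    have hcyc := hp3 t
    obtain ⟨hij, hjlen, hijeq, -⟩ := hcyc
    have hple : p ≤ (pos t).1 ∨ (pos t).2 ≤ p := by
      by_contra hcon
      push_neg at hcon
      exact absurd (hpout (by omega)) (by omega)
    rcases hple with hcase | hcase
    · rcases Nat.lt_or_ge p (pos t).1 with hlt | hge
      · left
        apply List.mem_of_getElem? (i := p)
        rw [List.getElem?_take_of_lt hlt]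
        exact hp
      · -- p = (pos t).1, so v also occurs at position (pos t).2
        have hpeq : p = (pos t).1 := by omega
        right
        apply List.mem_of_getElem? (i := 0)
        rw [List.getElem?_drop]
        rw [Nat.add_zero, ← hijeq, ← hpeq]
        exact hp
    · right
      apply List.mem_of_getElem? (i := p - (pos t).2)
      rw [List.getElem?_drop]
      rw [show (pos t).2 + (p - (pos t).2) = p by omega]
      exact hp
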